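/- Let Δ ≥ 3, λ > 0, and suppose q⁺, q⁻ ∈ (0,1) satisfy λ(1−q⁺)^(Δ−1) = q⁻/(1−q⁻) and λ(1−q⁻)^(Δ−1) = q⁺/(1−q⁺). Then γ := λ²(1−q⁺)^(Δ−2)·(1+λ(1−q⁺)^(Δ−1))^(Δ−2) / [λ + (1+λ(1−q⁺)^(Δ−1))^(Δ−1)]² equals q⁺·q⁻. -/

import Mathlib

theorem gamma_eq_qq (Δ : ℕ) (hΔ : 3 ≤ Δ) (lam : ℝ) (hlam : 0 < lam)
    (qPlus qMinus : ℝ) (hqPlus : qPlus ∈ Set.Ioo (0:ℝ) 1) (hqMinus : qMinus ∈ Set.Ioo (0:ℝ) 1)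
    (h1 : lam * (1 - qPlus)^(Δ - 1) = qMinus / (1 - qMinus))
    (h2 : lam * (1 - qMinus)^(Δ - 1) = qPlus / (1 - qPlus)) :
    lam^2 * (1 - qPlus)^(Δ - 2) * (1 + lam * (1 - qPlus)^(Δ - 1))^(Δ - 2)
      / (lam + (1 + lam * (1 - qPlus)^(Δ - 1))^(Δ - 1))^2 = qPlus * qMinus := by
  obtain ⟨n, rfl⟩ : ∃ n, Δ = n + 3 := ⟨Δ - 3, by omega⟩
  obtain ⟨hp0, hp1⟩ := hqPlus
  obtain ⟨hm0, hm1⟩ := hqMinus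
  have hp : (0:ℝ) < 1 - qPlus := by linarith
  have hm : (0:ℝ) < 1 - qMinus := by linarith
  have h1' : lam * (1 - qPlus)^(n+2) = qMinus / (1 - qMinus) := h1
  have h2' : lam * (1 - qMinus)^(n+2) = qPlus / (1 - qPlus) := h2
  show lam^2 * (1 - qPlus)^(n+1) * (1 + lam * (1 - qPlus)^(n+2))^(n+1)
      / (lam + (1 + lam * (1 - qPlus)^(n+2))^(n+2))^2 = qPlus * qMinus
  have e1 : lam * (1 - qPlus)^(n+2) * (1 - qMinus) = qMinus := by
    rw [h1']; field_simp
  have e2 : lam * (1 - qMinus)^(n+2) * (1 - qPlus) = qPlus := by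
    rw [h2']; field_simp
  have key1 : 1 + lam * (1 - qPlus)^(n+2) = 1 / (1 - qMinus) := by
    rw [h1', eq_div_iff hm.ne']; field_simp; ring
  have hden : lam + (1/(1-qMinus))^(n+2) = 1/((1-qPlus)*(1-qMinus)^(n+2)) := by
    rw [div_pow, one_pow, eq_div_iff (by positivity)]
    have h3 : lam * (1-qMinus)^(n+2) * (1-qPlus) + (1-qPlus) = 1 := by
      rw [e2]; ring
    field_simp
    nlinarith [h3, pow_pos hm (n+2)]
  rw [key1, hden]
  rw [div_eq_iff (by positivity)]
  field_simp
  have hx : (1/(1-qMinus))^(n+1) * ((1-qMinus)^(n+2))^2 = (1-qMinus)^(n+3) := by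
    rw [div_pow, one_pow, div_mul_eq_mul_div, div_eq_iff (pow_ne_zero _ hm.ne')]; ring
  linear_combination lam^2 * (1-qPlus)^(n+3) * hx
    + (lam * (1-qMinus)^(n+2) * (1-qPlus)) * e1 + qMinus * e2
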